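/- For A ⊆ [n] with |A| = k and 2 ≤ k ≤ n-2, the identity C(k,2)/C(n-2,k-2) + k(n-k)/C(n-2,k-1) + C(n-k,2)/C(n-2,k) = 4·C(n,2)/C(n,k) holds. -/

import Mathlib

/-- For `2 ≤ k ≤ n-2`:
`C(k,2)/C(n-2,k-2) + k(n-k)/C(n-2,k-1) + C(n-k,2)/C(n-2,k) = 4·C(n,2)/C(n,k)`. -/
theorem quadrant_contribution_identity (n k : ℕ) (h2 : 2 ≤ k) (hk : k ≤ n - 2) :
    ((k.choose 2 : ℝ)) / ((n - 2).choose (k - 2))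
      + ((k : ℝ) * (n - k)) / ((n - 2).choose (k - 1))
      + (((n - k).choose 2 : ℝ)) / ((n - 2).choose k)
    = 4 * (n.choose 2 : ℝ) / (n.choose k) := by
  have hn4 : 4 ≤ n := by omega
  have hkn : k ≤ n := by omega
  have E1 : n.choose k * k.choose 2 = n.choose 2 * (n-2).choose (k-2) :=
    Nat.choose_mul h2
  have h2nk : 2 ≤ n - k := by omega
  have E3 : n.choose k * (n-k).choose 2 = n.choose 2 * (n-2).choose k := by
    have h := Nat.choose_mul (n := n) h2nk
    rw [Nat.choose_symm hkn] at h
    rw [h]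
    congr 1
    have e : n - k - 2 = (n-2) - k := by omega
    rw [e, Nat.choose_symm hk]
  have E2 : n.choose k * (k * (n - k)) = 2 * n.choose 2 * (n-2).choose (k-1) := by
    have s1 : n.choose k * k.choose 1 = n.choose 1 * (n-1).choose (k-1) :=
      Nat.choose_mul (by omega)
    have s2 : (n-1).choose (n-k) * (n-k).choose 1 = (n-1).choose 1 * (n-2).choose (n-k-1) :=
      Nat.choose_mul (by omega)
    have hsymm1 : (n-1).choose (k-1) = (n-1).choose (n-k) := by
      rw [← Nat.choose_symm (show k-1 ≤ n-1 by omega)]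
      congr 1; omega
    have hsymm2 : (n-2).choose (n-k-1) = (n-2).choose (k-1) := by
      rw [← Nat.choose_symm (show k-1 ≤ n-2 by omega)]
      congr 1; omega
    have h2c : 2 * n.choose 2 = n * (n-1) := by
      have hev : ∃ m, n * (n-1) = m + m := by
        obtain ⟨m, hm⟩ := Nat.even_mul_succ_self (n-1)
        refine ⟨m, ?_⟩
        have e : (n-1) + 1 = n := by omega
        rw [e] at hm
        rw [mul_comm]; omega
      obtain ⟨m, hm⟩ := hev
      rw [Nat.choose_two_right]; omega
    simp only [Nat.choose_one_right] at s1 s2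
    rw [hsymm1] at s1
    rw [hsymm2] at s2
    rw [h2c]
    calc n.choose k * (k * (n-k)) = (n.choose k * k) * (n-k) := by ring
      _ = n * (n-1).choose (n-k) * (n-k) := by rw [s1]
      _ = n * ((n-1).choose (n-k) * (n-k)) := by ring
      _ = n * ((n-1) * (n-2).choose (k-1)) := by rw [s2]
      _ = n * (n-1) * (n-2).choose (k-1) := by ring
  have c1 : (0:ℝ) < (n-2).choose (k-2) := by exact_mod_cast Nat.choose_pos (by omega : k-2 ≤ n-2)
  have c2 : (0:ℝ) < (n-2).choose (k-1) := by exact_mod_cast Nat.choose_pos (by omega : k-1 ≤ n-2)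
  have c3 : (0:ℝ) < (n-2).choose k := by exact_mod_cast Nat.choose_pos hk
  have c0 : (0:ℝ) < n.choose k := by exact_mod_cast Nat.choose_pos hkn
  have r1 : (k.choose 2 : ℝ) / ((n-2).choose (k-2)) = (n.choose 2 : ℝ) / (n.choose k) := by
    rw [div_eq_div_iff c1.ne' c0.ne']
    exact_mod_cast (Nat.mul_comm _ _).trans E1
  have r2 : ((k : ℝ) * ((n:ℝ) - k)) / ((n-2).choose (k-1)) = 2 * (n.choose 2 : ℝ) / (n.choose k) := by
    rw [div_eq_div_iff c2.ne' c0.ne']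
    have : ((k:ℝ) * ((n:ℝ) - k)) = ((k * (n-k) : ℕ) : ℝ) := by
      push_cast [Nat.cast_sub hkn]; ring
    rw [this]
    exact_mod_cast (Nat.mul_comm _ _).trans E2
  have r3 : ((n-k).choose 2 : ℝ) / ((n-2).choose k) = (n.choose 2 : ℝ) / (n.choose k) := by
    rw [div_eq_div_iff c3.ne' c0.ne']
    exact_mod_cast (Nat.mul_comm _ _).trans E3
  rw [r1, r2, r3]
  ring
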